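/- Let Z = (1/√2)·[[1,1],[i,−i]]. Let f be the 4-ary function on bits with f(x₁x₂x₃x₄) = d if the string has Hamming weight 0 or 4 according to pattern (f(0000)=f(1111)=d, f(0011)=f(1100)=a, f(0110)=f(1001)=b, f(0101)=f(1010)=c, and f = 0 otherwise). Then Z⊗⁴·f (f viewed as a column vector in ℂ¹⁶) equals (1/2) times the vector g with g(0000)=g(1111)=a+b+c+d, g(0011)=g(1100)=−a+b+c−d, g(0110)=g(1001)=a−b+c−d, g(0101)=g(1010)=a+b−c−d, and g = 0 on all strings of odd Hamming weight. -/

import Mathlib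

set_option maxHeartbeats 2000000
open Kronecker Matrix

theorem holographic_eight_vertex (a b c d : ℂ) :
    let Z : Matrix (Fin 2) (Fin 2) ℂ :=
      (1 / Real.sqrt 2 : ℝ) • !![1, 1; Complex.I, -Complex.I]
    let f : Fin 2 × (Fin 2 × (Fin 2 × Fin 2)) → ℂ := fun x =>
      if x.1 = x.2.1 ∧ x.2.1 = x.2.2.1 ∧ x.2.2.1 = x.2.2.2 then d
      else if x.1 = x.2.1 ∧ x.2.2.1 = x.2.2.2 then a
      else if x.1 = x.2.2.2 ∧ x.2.1 = x.2.2.1 then b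
      else if x.1 = x.2.2.1 ∧ x.2.1 = x.2.2.2 then c
      else 0
    let g : Fin 2 × (Fin 2 × (Fin 2 × Fin 2)) → ℂ := fun x =>
      if x.1 = x.2.1 ∧ x.2.1 = x.2.2.1 ∧ x.2.2.1 = x.2.2.2 then a + b + c + d
      else if x.1 = x.2.1 ∧ x.2.2.1 = x.2.2.2 then -a + b + c - d
      else if x.1 = x.2.2.2 ∧ x.2.1 = x.2.2.1 then a - b + c - d
      else if x.1 = x.2.2.1 ∧ x.2.1 = x.2.2.2 then a + b - c - d
      else 0
    Matrix.mulVec (Z ⊗ₖ (Z ⊗ₖ (Z ⊗ₖ Z))) f = (1 / 2 : ℂ) • g := by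
  intro Z f g
  set M : Matrix (Fin 2) (Fin 2) ℂ := !![1, 1; Complex.I, -Complex.I] with hM
  set s : ℂ := ((1 / Real.sqrt 2 : ℝ) : ℂ) with hs
  have hZ : Z = s • M := by
    ext i j
    fin_cases i <;> fin_cases j <;> simp [Z, hM, hs, Complex.real_smul]
  have hs4 : s ^ 4 = 1 / 4 := by
    have h2 : ((Real.sqrt 2 : ℝ) : ℂ)^2 = 2 := by
      rw [← Complex.ofReal_pow, Real.sq_sqrt (by norm_num)]; norm_num
    rw [hs]
    push_cast
    rw [div_pow, one_pow, show (4:ℕ) = 2*2 from rfl, pow_mul, h2]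
    norm_num
  have hK : Z ⊗ₖ (Z ⊗ₖ (Z ⊗ₖ Z)) = (1/4 : ℂ) • (M ⊗ₖ (M ⊗ₖ (M ⊗ₖ M))) := by
    rw [hZ]
    simp only [Matrix.smul_kronecker, Matrix.kronecker_smul, smul_smul]
    rw [show s * s * s * s = s ^ 4 by ring, hs4]
  rw [hK, Matrix.smul_mulVec]
  funext x
  obtain ⟨i, j, k, l⟩ := x
  have hI := Complex.I_sq
  fin_cases i <;> fin_cases j <;> fin_cases k <;> fin_cases l <;>
    · simp [Matrix.mulVec, dotProduct, Fintype.sum_prod_type, Fin.sum_univ_two,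
        Matrix.kroneckerMap_apply, f, g, hM, Pi.smul_apply, smul_eq_mul]
      try ring_nf
      try simp [Complex.I_sq]
      try ring
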